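/- Fix real c > 2 and integer ℓ ≠ 0. The second-order ODE (2−c)ρ + (4−c)Δ ρ' + (Δ² − ℓ²) ρ'' = 0 on the interval (|ℓ|, ∞) has the solution ρ(Δ) = (Δ² − ℓ²)^{c/2 − 1}, and this is, up to scalar multiple, the unique solution (in the two-dimensional solution space) that extends continuously to Δ = |ℓ| with value 0. -/

import Mathlib

open Set Filter

/-- Key asymptotic lemma: if `h` satisfies `h' = K·(Δ²−L²)^{-c/2}` near `L⁺`, `ρ = h·(Δ²−L²)^p`
tends to `0` at `L⁺`, and `K ≥ 0`, then `K ≤ 0`. -/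
lemma aux_nonpos (c L p K : ℝ) (hc : 2 < c) (hL0 : 0 < L) (hpdef : p = c / 2 - 1)
    (ρ h : ℝ → ℝ)
    (hρh : ∀ Δ ∈ Ioi L, ρ Δ = h Δ * (Δ ^ 2 - L ^ 2) ^ p)
    (hh : ∀ Δ ∈ Ioi L, HasDerivAt h (K * (Δ ^ 2 - L ^ 2) ^ (-(c / 2))) Δ)
    (hlim : Tendsto ρ (nhdsWithin L (Ioi L)) (nhds 0)) : K ≤ 0 := by
  by_contra hKpos
  push_neg at hKpos
  have hp0 : 0 < p := by rw [hpdef]; linarith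
  set Δ₁ : ℝ := L + 1 with hΔ₁def
  have hΔ₁ : L < Δ₁ := by simp [hΔ₁def]
  set C : ℝ := (Δ₁ + L) ^ (-(c / 2)) / p with hCdef
  have hΔ₁L : 0 < Δ₁ + L := by linarith
  have hC : 0 < C := div_pos (Real.rpow_pos_of_pos hΔ₁L _) hp0
  -- the comparison function
  set φ : ℝ → ℝ := fun Δ => h Δ + K * C * (Δ - L) ^ (-p) with hφdef
  have hφ' : ∀ Δ ∈ Ioi L, HasDerivAt φ
      (K * (Δ ^ 2 - L ^ 2) ^ (-(c / 2)) + K * C * ((-p) * (Δ - L) ^ (-p - 1) * 1)) Δ := by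
    intro Δ hΔ
    have hΔL : (0:ℝ) < Δ - L := by simp only [mem_Ioi] at hΔ; linarith
    have h1 : HasDerivAt (fun Δ : ℝ => Δ - L) 1 Δ := (hasDerivAt_id Δ).sub_const L
    have h2 : HasDerivAt (fun Δ : ℝ => (Δ - L) ^ (-p)) ((-p) * (Δ - L) ^ (-p - 1) * 1) Δ :=
      by have := (Real.hasDerivAt_rpow_const (x := Δ - L) (p := -p) (Or.inl hΔL.ne')).comp Δ h1; exact this
    exact (hh Δ hΔ).add (h2.const_mul (K * C))
  -- derivative of φ is nonneg on (L, Δ₁)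
  have hφ'nonneg : ∀ Δ ∈ Ioo L Δ₁,
      0 ≤ K * (Δ ^ 2 - L ^ 2) ^ (-(c / 2)) + K * C * ((-p) * (Δ - L) ^ (-p - 1) * 1) := by
    intro Δ hΔ
    obtain ⟨h1, h2⟩ := hΔ
    have hΔL : (0:ℝ) < Δ - L := by linarith
    have hΔL' : (0:ℝ) < Δ + L := by linarith
    have hfac : Δ ^ 2 - L ^ 2 = (Δ - L) * (Δ + L) := by ring
    have hsplit : (Δ ^ 2 - L ^ 2) ^ (-(c / 2))
        = (Δ - L) ^ (-(c / 2)) * (Δ + L) ^ (-(c / 2)) := by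
      rw [hfac, Real.mul_rpow hΔL.le hΔL'.le]
    have hcmp : (Δ₁ + L) ^ (-(c / 2)) ≤ (Δ + L) ^ (-(c / 2)) :=
      Real.rpow_le_rpow_of_nonpos hΔL' (by linarith) (by linarith)
    have hCp : C * p = (Δ₁ + L) ^ (-(c / 2)) := by
      rw [hCdef]; field_simp
    have hexp : -p - 1 = -(c / 2) := by rw [hpdef]; ring
    rw [hexp, hsplit]
    have hpos : 0 < (Δ - L) ^ (-(c / 2)) := Real.rpow_pos_of_pos hΔL _
    rw [← hCp] at hcmp
    nlinarith [mul_nonneg (mul_nonneg hKpos.le hpos.le) (sub_nonneg.mpr hcmp)]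
  -- φ is monotone on (L, Δ₁]
  have hmono : MonotoneOn φ (Ioc L Δ₁) := by
    apply monotoneOn_of_hasDerivWithinAt_nonneg (convex_Ioc L Δ₁)
      (f' := fun Δ => K * (Δ ^ 2 - L ^ 2) ^ (-(c / 2)) + K * C * ((-p) * (Δ - L) ^ (-p - 1) * 1))
    · intro z hz
      exact (hφ' z hz.1).continuousAt.continuousWithinAt
    · intro z hz
      rw [interior_Ioc] at hz
      exact (hφ' z hz.1).hasDerivWithinAt
    · intro z hz
      rw [interior_Ioc] at hz
      exact hφ'nonneg z hz
  -- the resulting bound on ρ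
  have hbound : ∀ Δ ∈ Ioo L Δ₁,
      ρ Δ ≤ φ Δ₁ * (Δ ^ 2 - L ^ 2) ^ p - K * C * (Δ + L) ^ p := by
    intro Δ hΔ
    obtain ⟨h1, h2⟩ := hΔ
    have hΔL : (0:ℝ) < Δ - L := by linarith
    have hΔL' : (0:ℝ) < Δ + L := by linarith
    have hX : (0:ℝ) < Δ ^ 2 - L ^ 2 := by nlinarith
    have hφle : φ Δ ≤ φ Δ₁ := hmono ⟨h1, h2.le⟩ ⟨hΔ₁, le_rfl⟩ h2.le
    have hφΔ : φ Δ = h Δ + K * C * (Δ - L) ^ (-p) := rfl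
    have hhle : h Δ ≤ φ Δ₁ - K * C * (Δ - L) ^ (-p) := by
      rw [hφΔ] at hφle; linarith
    have hXp : (0:ℝ) < (Δ ^ 2 - L ^ 2) ^ p := Real.rpow_pos_of_pos hX _
    have := mul_le_mul_of_nonneg_right hhle hXp.le
    rw [hρh Δ h1]
    have hkey : (Δ - L) ^ (-p) * (Δ ^ 2 - L ^ 2) ^ p = (Δ + L) ^ p := by
      have hfac : Δ ^ 2 - L ^ 2 = (Δ - L) * (Δ + L) := by ring
      rw [hfac, Real.mul_rpow hΔL.le hΔL'.le, ← mul_assoc,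
        ← Real.rpow_add hΔL, neg_add_cancel, Real.rpow_zero, one_mul]
    calc h Δ * (Δ ^ 2 - L ^ 2) ^ p
        ≤ (φ Δ₁ - K * C * (Δ - L) ^ (-p)) * (Δ ^ 2 - L ^ 2) ^ p := this
      _ = φ Δ₁ * (Δ ^ 2 - L ^ 2) ^ p - K * C * ((Δ - L) ^ (-p) * (Δ ^ 2 - L ^ 2) ^ p) := by ring
      _ = φ Δ₁ * (Δ ^ 2 - L ^ 2) ^ p - K * C * (Δ + L) ^ p := by rw [hkey]
  -- limits
  have hXlim : Tendsto (fun Δ : ℝ => Δ ^ 2 - L ^ 2) (nhdsWithin L (Ioi L)) (nhds 0) := by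
    have : ContinuousAt (fun Δ : ℝ => Δ ^ 2 - L ^ 2) L := by fun_prop
    have h2 := this.tendsto.mono_left (nhdsWithin_le_nhds (s := Ioi L))
    simpa using h2
  have hXplim : Tendsto (fun Δ : ℝ => (Δ ^ 2 - L ^ 2) ^ p) (nhdsWithin L (Ioi L)) (nhds 0) := by
    have hcont : ContinuousAt (fun x : ℝ => x ^ p) 0 :=
      Real.continuousAt_rpow_const 0 p (Or.inr hp0.le)
    have := hcont.tendsto.comp hXlim
    simpa [Real.zero_rpow hp0.ne', Function.comp_def] using this
  have hsumlim : Tendsto (fun Δ : ℝ => (Δ + L) ^ p) (nhdsWithin L (Ioi L))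
      (nhds ((L + L) ^ p)) := by
    have hcont : ContinuousAt (fun Δ : ℝ => (Δ + L) ^ p) L := by
      apply ContinuousAt.rpow_const (by fun_prop)
      left; positivity
    exact hcont.tendsto.mono_left nhdsWithin_le_nhds
  have hFlim : Tendsto (fun Δ : ℝ => φ Δ₁ * (Δ ^ 2 - L ^ 2) ^ p - K * C * (Δ + L) ^ p)
      (nhdsWithin L (Ioi L)) (nhds (φ Δ₁ * 0 - K * C * (L + L) ^ p)) :=
    ((hXplim.const_mul _)).sub ((hsumlim.const_mul _))
  have hev : ∀ᶠ Δ in nhdsWithin L (Ioi L),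
      ρ Δ ≤ φ Δ₁ * (Δ ^ 2 - L ^ 2) ^ p - K * C * (Δ + L) ^ p := by
    filter_upwards [Ioo_mem_nhdsGT hΔ₁] with Δ hΔ using hbound Δ hΔ
  have hfinal : (0:ℝ) ≤ φ Δ₁ * 0 - K * C * (L + L) ^ p :=
    le_of_tendsto_of_tendsto hlim hFlim hev
  have hLL : (0:ℝ) < (L + L) ^ p := Real.rpow_pos_of_pos (by linarith) _
  nlinarith [mul_pos (mul_pos hKpos hC) hLL]


theorem stmt17 (c : ℝ) (hc : 2 < c) (ℓ : ℤ) (hℓ : ℓ ≠ 0) :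
    let ρ₀ : ℝ → ℝ := fun Δ => (Δ ^ 2 - (ℓ : ℝ) ^ 2) ^ (c / 2 - 1)
    (∀ Δ ∈ Ioi |(ℓ : ℝ)|,
        (2 - c) * ρ₀ Δ + (4 - c) * Δ * deriv ρ₀ Δ +
          (Δ ^ 2 - (ℓ : ℝ) ^ 2) * deriv (deriv ρ₀) Δ = 0) ∧
      (∀ ρ ρ' ρ'' : ℝ → ℝ,
        (∀ Δ ∈ Ioi |(ℓ : ℝ)|, HasDerivAt ρ (ρ' Δ) Δ) →
        (∀ Δ ∈ Ioi |(ℓ : ℝ)|, HasDerivAt ρ' (ρ'' Δ) Δ) →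
        (∀ Δ ∈ Ioi |(ℓ : ℝ)|,
          (2 - c) * ρ Δ + (4 - c) * Δ * ρ' Δ + (Δ ^ 2 - (ℓ : ℝ) ^ 2) * ρ'' Δ = 0) →
        Filter.Tendsto ρ (nhdsWithin |(ℓ : ℝ)| (Ioi |(ℓ : ℝ)|)) (nhds 0) →
        ∃ lam : ℝ, ∀ Δ ∈ Ioi |(ℓ : ℝ)|, ρ Δ = lam * ρ₀ Δ) := by
  intro ρ₀
  have hρ₀def : ∀ Δ : ℝ, ρ₀ Δ = (Δ ^ 2 - (ℓ : ℝ) ^ 2) ^ (c / 2 - 1) := fun _ => rfl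
  have hl : ((ℓ : ℝ)) ≠ 0 := Int.cast_ne_zero.mpr hℓ
  set L : ℝ := |(ℓ : ℝ)| with hLdef
  clear_value L
  have hL0 : 0 < L := hLdef ▸ abs_pos.mpr hl
  have hL2 : L ^ 2 = (ℓ : ℝ) ^ 2 := hLdef ▸ sq_abs _
  obtain ⟨p, hpdef⟩ : ∃ p : ℝ, p = c / 2 - 1 := ⟨_, rfl⟩
  have hp0 : 0 < p := by rw [hpdef]; linarith
  have hcp : c = 2 * p + 2 := by rw [hpdef]; ring
  have hρ₀p : ∀ Δ : ℝ, ρ₀ Δ = (Δ ^ 2 - (ℓ : ℝ) ^ 2) ^ p := by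
    intro Δ; rw [hρ₀def, hpdef]
  have hXpos : ∀ Δ ∈ Ioi L, 0 < Δ ^ 2 - (ℓ : ℝ) ^ 2 := by
    intro Δ hΔ
    simp only [mem_Ioi] at hΔ
    nlinarith [hL2]
  have hXD : ∀ Δ : ℝ, HasDerivAt (fun t : ℝ => t ^ 2 - (ℓ : ℝ) ^ 2) (2 * Δ) Δ := by
    intro Δ
    simpa using (hasDerivAt_pow 2 Δ).sub_const ((ℓ : ℝ) ^ 2)
  -- first derivative of ρ₀
  have hd1 : ∀ Δ ∈ Ioi L,
      HasDerivAt ρ₀ (p * (Δ ^ 2 - (ℓ : ℝ) ^ 2) ^ (p - 1) * (2 * Δ)) Δ := by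
    intro Δ hΔ
    have h1 : HasDerivAt (fun t : ℝ => (t ^ 2 - (ℓ : ℝ) ^ 2) ^ p)
        (p * (Δ ^ 2 - (ℓ : ℝ) ^ 2) ^ (p - 1) * (2 * Δ)) Δ :=
      by have := (Real.hasDerivAt_rpow_const (x := Δ ^ 2 - (ℓ : ℝ) ^ 2) (p := p) (Or.inl (hXpos Δ hΔ).ne')).comp Δ (hXD Δ); exact this
    have he : ρ₀ = fun t : ℝ => (t ^ 2 - (ℓ : ℝ) ^ 2) ^ p := funext hρ₀p
    rw [he]
    exact h1
  obtain ⟨ρ₁, hρ₁def⟩ : ∃ ρ₁ : ℝ → ℝ,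
      ρ₁ = fun Δ => p * (Δ ^ 2 - (ℓ : ℝ) ^ 2) ^ (p - 1) * (2 * Δ) := ⟨_, rfl⟩
  have hρ₁ : ∀ Δ : ℝ, ρ₁ Δ = p * (Δ ^ 2 - (ℓ : ℝ) ^ 2) ^ (p - 1) * (2 * Δ) := by
    intro Δ; rw [hρ₁def]
  -- derivative of ρ₁
  have hd2 : ∀ Δ ∈ Ioi L, HasDerivAt ρ₁
      (p * ((p - 1) * (Δ ^ 2 - (ℓ : ℝ) ^ 2) ^ (p - 1 - 1) * (2 * Δ)) * (2 * Δ)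
        + p * (Δ ^ 2 - (ℓ : ℝ) ^ 2) ^ (p - 1) * 2) Δ := by
    intro Δ hΔ
    have h1 : HasDerivAt (fun t : ℝ => (t ^ 2 - (ℓ : ℝ) ^ 2) ^ (p - 1))
        ((p - 1) * (Δ ^ 2 - (ℓ : ℝ) ^ 2) ^ (p - 1 - 1) * (2 * Δ)) Δ :=
      by have := (Real.hasDerivAt_rpow_const (x := Δ ^ 2 - (ℓ : ℝ) ^ 2) (p := p - 1) (Or.inl (hXpos Δ hΔ).ne')).comp Δ (hXD Δ); exact this
    have h2 : HasDerivAt (fun t : ℝ => 2 * t) 2 Δ := by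
      simpa using (hasDerivAt_id Δ).const_mul (2 : ℝ)
    have h3 := (h1.const_mul p).mul h2
    rw [hρ₁def]
    convert h3 using 1
    all_goals rfl
  constructor
  · -- ρ₀ solves the ODE
    intro Δ hΔ
    have hder1 : deriv ρ₀ Δ = ρ₁ Δ := by rw [(hd1 Δ hΔ).deriv, hρ₁]
    have hev : deriv ρ₀ =ᶠ[nhds Δ] ρ₁ :=
      Filter.eventuallyEq_of_mem (isOpen_Ioi.mem_nhds hΔ)
        (fun z hz => by rw [(hd1 z hz).deriv, hρ₁])
    have hder2 : deriv (deriv ρ₀) Δ = deriv ρ₁ Δ := hev.deriv_eq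
    rw [hρ₀def, hder1, hρ₁, hder2, (hd2 Δ hΔ).deriv]
    have hXne := (hXpos Δ hΔ).ne'
    have hpc : c / 2 - 1 = p := hpdef.symm
    have e2 : (Δ ^ 2 - (ℓ : ℝ) ^ 2) ^ (p - 1)
        = (Δ ^ 2 - (ℓ : ℝ) ^ 2) ^ (p - 1 - 1) * (Δ ^ 2 - (ℓ : ℝ) ^ 2) := by
      rw [← Real.rpow_add_one hXne (p - 1 - 1)]; norm_num
    have e1 : (Δ ^ 2 - (ℓ : ℝ) ^ 2) ^ (c / 2 - 1)
        = (Δ ^ 2 - (ℓ : ℝ) ^ 2) ^ (p - 1 - 1) * (Δ ^ 2 - (ℓ : ℝ) ^ 2)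
          * (Δ ^ 2 - (ℓ : ℝ) ^ 2) := by
      rw [hpc, ← e2, ← Real.rpow_add_one hXne (p - 1)]; norm_num
    rw [e1, e2, hcp]
    ring
  · -- uniqueness
    intro ρ ρ' ρ'' hρ hρ' hode hlim
    obtain ⟨g, hgdef⟩ : ∃ g : ℝ → ℝ,
        g = fun Δ => (Δ ^ 2 - (ℓ : ℝ) ^ 2) * ρ' Δ + (2 - c) * Δ * ρ Δ := ⟨_, rfl⟩
    have hgΔ : ∀ Δ : ℝ, g Δ = (Δ ^ 2 - (ℓ : ℝ) ^ 2) * ρ' Δ + (2 - c) * Δ * ρ Δ := by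
      intro Δ; rw [hgdef]
    have hg : ∀ Δ ∈ Ioi L, HasDerivAt g 0 Δ := by
      intro Δ hΔ
      have h1 := ((hXD Δ).mul (hρ' Δ hΔ)).add
        (((hasDerivAt_id Δ).const_mul (2 - c)).mul (hρ Δ hΔ))
      have h2 : HasDerivAt g
          (2 * Δ * ρ' Δ + (Δ ^ 2 - (ℓ : ℝ) ^ 2) * ρ'' Δ
            + ((2 - c) * 1 * ρ Δ + (2 - c) * Δ * ρ' Δ)) Δ := by
        rw [hgdef]
        convert h1 using 2
        all_goals rfl
      have h3 := hode Δ hΔ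
      have h4 : 2 * Δ * ρ' Δ + (Δ ^ 2 - (ℓ : ℝ) ^ 2) * ρ'' Δ
          + ((2 - c) * 1 * ρ Δ + (2 - c) * Δ * ρ' Δ) = 0 := by linarith
      rwa [h4] at h2
    -- g is constant
    have hgconst : ∀ x ∈ Ioi L, ∀ y ∈ Ioi L, g x = g y := by
      have hmono : MonotoneOn g (Ioi L) :=
        monotoneOn_of_hasDerivWithinAt_nonneg (f' := fun _ => 0) (convex_Ioi L)
          (fun z hz => (hg z hz).continuousAt.continuousWithinAt)
          (fun z hz => by rw [interior_Ioi] at hz; exact (hg z hz).hasDerivWithinAt)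
          (fun z _ => le_rfl)
      have hanti : AntitoneOn g (Ioi L) :=
        antitoneOn_of_hasDerivWithinAt_nonpos (f' := fun _ => 0) (convex_Ioi L)
          (fun z hz => (hg z hz).continuousAt.continuousWithinAt)
          (fun z hz => by rw [interior_Ioi] at hz; exact (hg z hz).hasDerivWithinAt)
          (fun z _ => le_rfl)
      intro x hx y hy
      rcases le_total x y with hxy | hxy
      · exact le_antisymm (hmono hx hy hxy) (hanti hx hy hxy)
      · exact le_antisymm (hanti hy hx hxy) (hmono hy hx hxy)
    have hL1 : L + 1 ∈ Ioi L := by simp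
    obtain ⟨K, hKdef⟩ : ∃ K : ℝ, K = g (L + 1) := ⟨_, rfl⟩
    have hgK : ∀ Δ ∈ Ioi L, (Δ ^ 2 - (ℓ : ℝ) ^ 2) * ρ' Δ + (2 - c) * Δ * ρ Δ = K := by
      intro Δ hΔ
      rw [hKdef, ← hgΔ]
      exact hgconst Δ hΔ (L + 1) hL1
    -- h = ρ / ρ₀
    obtain ⟨h, hhdef⟩ : ∃ h : ℝ → ℝ,
        h = fun Δ => ρ Δ * (Δ ^ 2 - (ℓ : ℝ) ^ 2) ^ (-p) := ⟨_, rfl⟩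
    have hhΔ : ∀ Δ : ℝ, h Δ = ρ Δ * (Δ ^ 2 - (ℓ : ℝ) ^ 2) ^ (-p) := by
      intro Δ; rw [hhdef]
    have hh : ∀ Δ ∈ Ioi L, HasDerivAt h (K * (Δ ^ 2 - L ^ 2) ^ (-(c / 2))) Δ := by
      intro Δ hΔ
      have hXne := (hXpos Δ hΔ).ne'
      have h1 : HasDerivAt (fun t : ℝ => (t ^ 2 - (ℓ : ℝ) ^ 2) ^ (-p))
          ((-p) * (Δ ^ 2 - (ℓ : ℝ) ^ 2) ^ (-p - 1) * (2 * Δ)) Δ :=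
        by have := (Real.hasDerivAt_rpow_const (x := Δ ^ 2 - (ℓ : ℝ) ^ 2) (p := -p) (Or.inl hXne)).comp Δ (hXD Δ); exact this
      have h2 := (hρ Δ hΔ).mul h1
      rw [show (ρ * fun t => (t ^ 2 - (ℓ : ℝ) ^ 2) ^ (-p)) = h from hhdef.symm] at h2
      have h3 : ρ' Δ * (Δ ^ 2 - (ℓ : ℝ) ^ 2) ^ (-p)
          + ρ Δ * ((-p) * (Δ ^ 2 - (ℓ : ℝ) ^ 2) ^ (-p - 1) * (2 * Δ))
          = K * (Δ ^ 2 - L ^ 2) ^ (-(c / 2)) := by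
        have e1 : (Δ ^ 2 - (ℓ : ℝ) ^ 2) ^ (-p)
            = (Δ ^ 2 - (ℓ : ℝ) ^ 2) ^ (-p - 1) * (Δ ^ 2 - (ℓ : ℝ) ^ 2) := by
          rw [← Real.rpow_add_one hXne (-p - 1)]
          norm_num
        have e2 : (Δ ^ 2 - L ^ 2) ^ (-(c / 2)) = (Δ ^ 2 - (ℓ : ℝ) ^ 2) ^ (-p - 1) := by
          rw [hL2]
          congr 1
          rw [hpdef]; ring
        rw [e1, e2, ← hgK Δ hΔ, hcp]
        ring
      rw [← h3]
      exact h2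
    have hρh : ∀ Δ ∈ Ioi L, ρ Δ = h Δ * (Δ ^ 2 - L ^ 2) ^ p := by
      intro Δ hΔ
      have hX := hXpos Δ hΔ
      have hXp : (0:ℝ) < (Δ ^ 2 - (ℓ : ℝ) ^ 2) ^ p := Real.rpow_pos_of_pos hX _
      rw [hL2, hhΔ, Real.rpow_neg hX.le]
      field_simp
    -- K = 0
    have hK0 : K = 0 := by
      have h1 : K ≤ 0 := aux_nonpos c L p K hc hL0 hpdef ρ h hρh hh hlim
      have h2 : -K ≤ 0 := by
        apply aux_nonpos c L p (-K) hc hL0 hpdef (fun Δ => -ρ Δ) (fun Δ => -h Δ)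
        · intro Δ hΔ
          rw [hρh Δ hΔ]; ring
        · intro Δ hΔ
          have := (hh Δ hΔ).neg
          rw [show -K * (Δ ^ 2 - L ^ 2) ^ (-(c / 2)) = -(K * (Δ ^ 2 - L ^ 2) ^ (-(c / 2))) by ring]
          exact this
        · simpa using hlim.neg
      linarith
    -- h is constant
    have hh0 : ∀ Δ ∈ Ioi L, HasDerivAt h 0 Δ := by
      intro Δ hΔ
      have := hh Δ hΔ
      rwa [hK0, zero_mul] at this
    have hhconst : ∀ x ∈ Ioi L, h x = h (L + 1) := by
      have hmono : MonotoneOn h (Ioi L) :=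
        monotoneOn_of_hasDerivWithinAt_nonneg (f' := fun _ => 0) (convex_Ioi L)
          (fun z hz => (hh0 z hz).continuousAt.continuousWithinAt)
          (fun z hz => by rw [interior_Ioi] at hz; exact (hh0 z hz).hasDerivWithinAt)
          (fun z _ => le_rfl)
      have hanti : AntitoneOn h (Ioi L) :=
        antitoneOn_of_hasDerivWithinAt_nonpos (f' := fun _ => 0) (convex_Ioi L)
          (fun z hz => (hh0 z hz).continuousAt.continuousWithinAt)
          (fun z hz => by rw [interior_Ioi] at hz; exact (hh0 z hz).hasDerivWithinAt)
          (fun z _ => le_rfl)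
      intro x hx
      rcases le_total x (L + 1) with hxy | hxy
      · exact le_antisymm (hmono hx hL1 hxy) (hanti hx hL1 hxy)
      · exact le_antisymm (hanti hL1 hx hxy) (hmono hL1 hx hxy)
    refine ⟨h (L + 1), fun Δ hΔ => ?_⟩
    have h5 := hρh Δ hΔ
    rw [hhconst Δ hΔ] at h5
    rw [h5, hL2, hρ₀p]
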